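/- Let R be a unital associative ℝ-algebra, let a, τ, q ∈ ℝ, and let w, v ∈ R satisfy the C_{L,a}-relations: w·w·v = a•w − q•(v·w·w) + τ•(w·v·w) and w·v·v = a•v − q•(v·v·w) + τ•(v·w·v). Then w·v and v·w commute: (w·v)·(v·w) = (v·w)·(w·v). -/
import Mathlib

/-- For elements `w, v` of a unital associative ℝ-algebra satisfying the
`C_{L,a}`-relations, `w*v` and `v*w` commute. -/
theorem stmt_0 (R : Type*) [Ring R] [Algebra ℝ R] (a τ q : ℝ) (w v : R)
    (h1 : w * w * v = a • w - q • (v * w * w) + τ • (w * v * w))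
    (h2 : w * v * v = a • v - q • (v * v * w) + τ • (v * w * v)) :
    (w * v) * (v * w) = (v * w) * (w * v) := by
  have e1 : (w * v) * (v * w) = (w * v * v) * w := by noncomm_ring
  have e2 : (v * w) * (w * v) = v * (w * w * v) := by noncomm_ring
  rw [e1, e2, h1, h2]
  simp only [smul_sub, smul_add, smul_mul_assoc, mul_smul_comm, mul_sub, mul_add,
    sub_mul, add_mul]
  noncomm_ring
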